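/- Suppose F and G have finite and equal second moments, i.e. ∫ x² dF(x) = ∫ x² dν(x) < ∞. Then for every a > 0, sup_x [x² |F(x) − G(x)|] ≤ 4a² Δ + ∫_{|x| ≥ a} x² dν(x) + max{ sup_{x ≥ a} [x² |1 − G(x)|], sup_{x ≤ −a} [x² |G(x)|] }. -/

import Mathlib

open MeasureTheory

private lemma meas_union_toReal (m : Measure ℝ) [IsFiniteMeasure m] {s t : Set ℝ}
    (hd : Disjoint s t) (ht : MeasurableSet t) :
    (m (s ∪ t)).toReal = (m s).toReal + (m t).toReal := by
  rw [measure_union hd ht, ENNReal.toReal_add (measure_ne_top m s) (measure_ne_top m t)]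

private lemma meas_compl_toReal (m : Measure ℝ) [IsFiniteMeasure m] {s : Set ℝ}
    (hs : MeasurableSet s) :
    (m s).toReal + (m sᶜ).toReal = (m Set.univ).toReal := by
  rw [← ENNReal.toReal_add (measure_ne_top m s) (measure_ne_top m sᶜ),
    measure_add_measure_compl hs]

private lemma const_le_setIntegral (m : Measure ℝ) [IsFiniteMeasure m]
    (hm2 : Integrable (fun x : ℝ => x ^ 2) m) {c : ℝ} {S : Set ℝ} (hS : MeasurableSet S)
    (hc : ∀ y ∈ S, c ≤ y ^ 2) :
    c * (m S).toReal ≤ ∫ y in S, y ^ 2 ∂m := by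
  have h1 : ∫ y in S, c ∂m = (m S).toReal • c := setIntegral_const c
  have h2 : (∫ y in S, c ∂m) ≤ ∫ y in S, y ^ 2 ∂m :=
    setIntegral_mono_on (integrableOn_const (measure_lt_top m S).ne)
      hm2.integrableOn hS hc
  rw [h1, smul_eq_mul] at h2
  linarith [h2]

private lemma tail_right (m : Measure ℝ) [IsFiniteMeasure m]
    (hm2 : Integrable (fun x : ℝ => x ^ 2) m) {y : ℝ} (hy : 0 ≤ y) :
    y ^ 2 * (m (Set.Ioi y)).toReal ≤ ∫ t, t ^ 2 ∂m := by
  refine le_trans (const_le_setIntegral m hm2 measurableSet_Ioi ?_) ?_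
  · intro t ht
    have hyt : y < t := ht
    nlinarith
  · exact setIntegral_le_integral hm2 (Filter.Eventually.of_forall fun t => sq_nonneg t)

private lemma tail_left (m : Measure ℝ) [IsFiniteMeasure m]
    (hm2 : Integrable (fun x : ℝ => x ^ 2) m) {y : ℝ} (hy : y ≤ 0) :
    y ^ 2 * (m (Set.Iic y)).toReal ≤ ∫ t, t ^ 2 ∂m := by
  refine le_trans (const_le_setIntegral m hm2 measurableSet_Iic ?_) ?_
  · intro t ht
    have hyt : t ≤ y := ht
    nlinarith
  · exact setIntegral_le_integral hm2 (Filter.Eventually.of_forall fun t => sq_nonneg t)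

private lemma layer_eq (m : Measure ℝ) [IsFiniteMeasure m]
    (hm2 : Integrable (fun x : ℝ => x ^ 2) m) {S : Set ℝ} (hS : MeasurableSet S) :
    ∫ y in S, y ^ 2 ∂m = ∫ t in Set.Ioi 0, (m ({y : ℝ | t < y ^ 2} ∩ S)).toReal := by
  have h := Integrable.integral_eq_integral_meas_lt (μ := m.restrict S)
      (f := fun y : ℝ => y ^ 2) hm2.integrableOn
      (Filter.Eventually.of_forall fun y => sq_nonneg y)
  rw [h]
  refine setIntegral_congr_fun measurableSet_Ioi fun t _ => ?_
  have hms : MeasurableSet {y : ℝ | t < y ^ 2} :=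
    measurableSet_lt measurable_const (continuous_pow 2).measurable
  show ((m.restrict S) {y : ℝ | t < y ^ 2}).toReal = _
  rw [Measure.restrict_apply hms]

set_option maxHeartbeats 1000000 in
/-- **Lemma 3.1.** Let `F` be the distribution function of a probability measure `μ` on `ℝ`
and let `G(x) = ν((-∞,x])` for a finite signed measure `ν = ν₁ - ν₂` with `ν(ℝ) = 1`.
If `F` and `G` have finite and equal second moments, then for every `a > 0`,
`sup_x [x²|F(x)-G(x)|] ≤ 4a²Δ + ∫_{|x|≥a} x² dν + max{sup_{x≥a} x²|1-G(x)|, sup_{x≤-a} x²|G(x)|}`,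
where `Δ = sup_x |F(x)-G(x)|`. -/
theorem stmt_3
    (μ : Measure ℝ) [IsProbabilityMeasure μ]
    (ν₁ ν₂ : Measure ℝ) [IsFiniteMeasure ν₁] [IsFiniteMeasure ν₂]
    (hν : (ν₁ Set.univ).toReal - (ν₂ Set.univ).toReal = 1)
    (F G : ℝ → ℝ)
    (hFdef : ∀ x, F x = (μ (Set.Iic x)).toReal)
    (hGdef : ∀ x, G x = (ν₁ (Set.Iic x)).toReal - (ν₂ (Set.Iic x)).toReal)
    (hμ2 : Integrable (fun x : ℝ => x ^ 2) μ)
    (hν₁2 : Integrable (fun x : ℝ => x ^ 2) ν₁)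
    (hν₂2 : Integrable (fun x : ℝ => x ^ 2) ν₂)
    (hmom : ∫ x, x ^ 2 ∂μ = (∫ x, x ^ 2 ∂ν₁) - ∫ x, x ^ 2 ∂ν₂)
    (Δ : ℝ) (hΔ : Δ = ⨆ x : ℝ, |F x - G x|) :
    ∀ a : ℝ, 0 < a →
      ∀ x : ℝ, x ^ 2 * |F x - G x| ≤
        4 * a ^ 2 * Δ
        + ((∫ y in {y : ℝ | a ≤ |y|}, y ^ 2 ∂ν₁) - ∫ y in {y : ℝ | a ≤ |y|}, y ^ 2 ∂ν₂)
        + max (⨆ y ∈ Set.Ici a, y ^ 2 * |1 - G y|)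
            (⨆ y ∈ Set.Iic (-a), y ^ 2 * |G y|) := by
  intro a ha x
  -- Basic measurability and set facts
  have hT : MeasurableSet {y : ℝ | a ≤ |y|} :=
    measurableSet_le measurable_const continuous_abs.measurable
  have hTc : {y : ℝ | a ≤ |y|}ᶜ = Set.Ioo (-a) a := by
    ext y
    simp [Set.mem_compl_iff, not_le, abs_lt, Set.mem_Ioo]
  have hTsplit : {y : ℝ | a ≤ |y|} = Set.Iic (-a) ∪ Set.Ici a := by
    ext y
    simp only [Set.mem_setOf_eq, Set.mem_union, Set.mem_Iic, Set.mem_Ici, le_abs]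
    constructor
    · rintro (h | h)
      · exact Or.inr h
      · exact Or.inl (by linarith)
    · rintro (h | h)
      · exact Or.inr (by linarith)
      · exact Or.inl h
  -- Basic facts about F and G
  have hμuniv : (μ Set.univ).toReal = 1 := by simp
  have hF0 : ∀ s : ℝ, 0 ≤ F s := fun s => by rw [hFdef s]; exact ENNReal.toReal_nonneg
  have hF1 : ∀ s : ℝ, F s ≤ 1 := fun s => by
    rw [hFdef s, ← hμuniv]
    exact ENNReal.toReal_mono (measure_ne_top μ _) (measure_mono (Set.subset_univ _))
  have hGabs : ∀ s : ℝ, |G s| ≤ (ν₁ Set.univ).toReal + (ν₂ Set.univ).toReal := by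
    intro s
    rw [hGdef s]
    refine le_trans (abs_sub _ _) ?_
    rw [abs_of_nonneg ENNReal.toReal_nonneg, abs_of_nonneg ENNReal.toReal_nonneg]
    have e1 : (ν₁ (Set.Iic s)).toReal ≤ (ν₁ Set.univ).toReal :=
      ENNReal.toReal_mono (measure_ne_top ν₁ _) (measure_mono (Set.subset_univ _))
    have e2 : (ν₂ (Set.Iic s)).toReal ≤ (ν₂ Set.univ).toReal :=
      ENNReal.toReal_mono (measure_ne_top ν₂ _) (measure_mono (Set.subset_univ _))
    linarith
  have hΔpt : ∀ s : ℝ, |F s - G s| ≤ Δ := by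
    intro s
    rw [hΔ]
    refine le_ciSup (f := fun s : ℝ => |F s - G s|)
      ⟨1 + ((ν₁ Set.univ).toReal + (ν₂ Set.univ).toReal), ?_⟩ s
    rintro z ⟨u, rfl⟩
    have h1 := hGabs u
    have h2 := hF0 u
    have h3 := hF1 u
    refine le_trans (abs_sub _ _) ?_
    rw [abs_of_nonneg h2]
    linarith
  have hΔ0 : 0 ≤ Δ := le_trans (abs_nonneg _) (hΔpt 0)
  -- `Iio` bound via monotone limits
  have hIio : ∀ s : ℝ,
      |(μ (Set.Iio s)).toReal - ((ν₁ (Set.Iio s)).toReal - (ν₂ (Set.Iio s)).toReal)| ≤ Δ := by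
    intro s
    have hmono : Monotone fun n : ℕ => Set.Iic (s - 1 / (n + 1)) := by
      intro n k hnk
      apply Set.Iic_subset_Iic.mpr
      have h1 : (0:ℝ) < (n : ℝ) + 1 := by positivity
      have h2 : (n:ℝ) + 1 ≤ (k:ℝ) + 1 := by
        have : (n:ℝ) ≤ (k:ℝ) := Nat.cast_le.mpr hnk
        linarith
      have := one_div_le_one_div_of_le h1 h2
      linarith
    have hU : (⋃ n : ℕ, Set.Iic (s - 1 / ((n : ℝ) + 1))) = Set.Iio s := by
      ext y
      simp only [Set.mem_iUnion, Set.mem_Iic, Set.mem_Iio]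
      constructor
      · rintro ⟨n, hn⟩
        have h1 : (0:ℝ) < 1 / ((n:ℝ) + 1) := by positivity
        linarith
      · intro hy
        obtain ⟨n, hn⟩ := exists_nat_one_div_lt (by linarith : (0:ℝ) < s - y)
        exact ⟨n, by linarith⟩
    have htend : ∀ (m : Measure ℝ) [IsFiniteMeasure m],
        Filter.Tendsto (fun n : ℕ => (m (Set.Iic (s - 1 / ((n : ℝ) + 1)))).toReal)
          Filter.atTop (nhds (m (Set.Iio s)).toReal) := by
      intro m _
      have h1 := tendsto_measure_iUnion_atTop (μ := m) hmono
      rw [hU] at h1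
      exact (ENNReal.tendsto_toReal (measure_ne_top m _)).comp h1
    have hcomb : Filter.Tendsto
        (fun n : ℕ => F (s - 1 / ((n : ℝ) + 1)) - G (s - 1 / ((n : ℝ) + 1))) Filter.atTop
        (nhds ((μ (Set.Iio s)).toReal - ((ν₁ (Set.Iio s)).toReal - (ν₂ (Set.Iio s)).toReal))) := by
      have h := (htend μ).sub ((htend ν₁).sub (htend ν₂))
      have heq : (fun n : ℕ => F (s - 1 / ((n : ℝ) + 1)) - G (s - 1 / ((n : ℝ) + 1)))
          = fun n : ℕ => (μ (Set.Iic (s - 1 / ((n : ℝ) + 1)))).toReal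
            - ((ν₁ (Set.Iic (s - 1 / ((n : ℝ) + 1)))).toReal
              - (ν₂ (Set.Iic (s - 1 / ((n : ℝ) + 1)))).toReal) := by
        funext n
        rw [hFdef, hGdef]
      rw [heq]
      exact h
    exact le_of_tendsto hcomb.abs (Filter.Eventually.of_forall fun n => hΔpt _)
  -- Complement identities
  have hFIoi : ∀ s : ℝ, (μ (Set.Ioi s)).toReal = 1 - F s := by
    intro s
    have h := meas_compl_toReal μ (measurableSet_Iic (a := s))
    rw [Set.compl_Iic, hμuniv] at h
    rw [hFdef]
    linarith
  have hGIoi : ∀ s : ℝ, (ν₁ (Set.Ioi s)).toReal - (ν₂ (Set.Ioi s)).toReal = 1 - G s := by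
    intro s
    have h1 := meas_compl_toReal ν₁ (measurableSet_Iic (a := s))
    have h2 := meas_compl_toReal ν₂ (measurableSet_Iic (a := s))
    rw [Set.compl_Iic] at h1 h2
    rw [hGdef]
    linarith
  have hIciId : ∀ (m : Measure ℝ) [IsFiniteMeasure m],
      (m (Set.Iio a)).toReal + (m (Set.Ici a)).toReal = (m Set.univ).toReal := by
    intro m _
    have h := meas_compl_toReal m (measurableSet_Iio (a := a))
    rwa [Set.compl_Iio] at h
  have hTdec : ∀ (m : Measure ℝ) [IsFiniteMeasure m],
      (m {y : ℝ | a ≤ |y|}).toReal = (m (Set.Iic (-a))).toReal + (m (Set.Ici a)).toReal := by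
    intro m _
    rw [hTsplit]
    exact meas_union_toReal m
      (by
        rw [Set.disjoint_left]
        intro y h1 h2
        simp only [Set.mem_Iic] at h1
        simp only [Set.mem_Ici] at h2
        linarith)
      measurableSet_Ici
  -- Supremum bounds
  have hP1 : ∀ y : ℝ, a ≤ y → y ^ 2 * |1 - G y| ≤ ⨆ y ∈ Set.Ici a, y ^ 2 * |1 - G y| := by
    have hbound : ∀ y : ℝ, a ≤ y →
        y ^ 2 * |1 - G y| ≤ (∫ t, t ^ 2 ∂ν₁) + ∫ t, t ^ 2 ∂ν₂ := by
      intro y hy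
      have h0y : (0:ℝ) ≤ y := le_trans ha.le hy
      rw [← hGIoi y]
      have habs : |(ν₁ (Set.Ioi y)).toReal - (ν₂ (Set.Ioi y)).toReal|
          ≤ (ν₁ (Set.Ioi y)).toReal + (ν₂ (Set.Ioi y)).toReal := by
        refine le_trans (abs_sub _ _) ?_
        rw [abs_of_nonneg ENNReal.toReal_nonneg, abs_of_nonneg ENNReal.toReal_nonneg]
      have t1 := tail_right ν₁ hν₁2 h0y
      have t2 := tail_right ν₂ hν₂2 h0y
      have := mul_le_mul_of_nonneg_left habs (sq_nonneg y)
      nlinarith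
    intro y hy
    have hmem : (⨆ _ : y ∈ Set.Ici a, y ^ 2 * |1 - G y|) = y ^ 2 * |1 - G y| :=
      ciSup_pos (Set.mem_Ici.mpr hy)
    rw [← hmem]
    refine le_ciSup (f := fun y : ℝ => ⨆ _ : y ∈ Set.Ici a, y ^ 2 * |1 - G y|)
      ⟨max ((∫ t, t ^ 2 ∂ν₁) + ∫ t, t ^ 2 ∂ν₂) 0, ?_⟩ y
    rintro z ⟨u, rfl⟩
    show (⨆ _ : u ∈ Set.Ici a, u ^ 2 * |1 - G u|) ≤ _
    by_cases hu : u ∈ Set.Ici a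
    · rw [ciSup_pos hu]
      exact le_max_of_le_left (hbound u hu)
    · haveI : IsEmpty (u ∈ Set.Ici a) := ⟨hu⟩
      rw [Real.iSup_of_isEmpty]
      exact le_max_right _ _
  have hP2 : ∀ y : ℝ, y ≤ -a → y ^ 2 * |G y| ≤ ⨆ y ∈ Set.Iic (-a), y ^ 2 * |G y| := by
    have hbound : ∀ y : ℝ, y ≤ -a →
        y ^ 2 * |G y| ≤ (∫ t, t ^ 2 ∂ν₁) + ∫ t, t ^ 2 ∂ν₂ := by
      intro y hy
      have h0y : y ≤ 0 := by linarith
      rw [hGdef y]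
      have habs : |(ν₁ (Set.Iic y)).toReal - (ν₂ (Set.Iic y)).toReal|
          ≤ (ν₁ (Set.Iic y)).toReal + (ν₂ (Set.Iic y)).toReal := by
        refine le_trans (abs_sub _ _) ?_
        rw [abs_of_nonneg ENNReal.toReal_nonneg, abs_of_nonneg ENNReal.toReal_nonneg]
      have t1 := tail_left ν₁ hν₁2 h0y
      have t2 := tail_left ν₂ hν₂2 h0y
      have := mul_le_mul_of_nonneg_left habs (sq_nonneg y)
      nlinarith
    intro y hy
    have hmem : (⨆ _ : y ∈ Set.Iic (-a), y ^ 2 * |G y|) = y ^ 2 * |G y| :=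
      ciSup_pos (Set.mem_Iic.mpr hy)
    rw [← hmem]
    refine le_ciSup (f := fun y : ℝ => ⨆ _ : y ∈ Set.Iic (-a), y ^ 2 * |G y|)
      ⟨max ((∫ t, t ^ 2 ∂ν₁) + ∫ t, t ^ 2 ∂ν₂) 0, ?_⟩ y
    rintro z ⟨u, rfl⟩
    show (⨆ _ : u ∈ Set.Iic (-a), u ^ 2 * |G u|) ≤ _
    by_cases hu : u ∈ Set.Iic (-a)
    · rw [ciSup_pos hu]
      exact le_max_of_le_left (hbound u hu)
    · haveI : IsEmpty (u ∈ Set.Iic (-a)) := ⟨hu⟩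
      rw [Real.iSup_of_isEmpty]
      exact le_max_right _ _
  -- Layer cake machinery
  set A : ℝ → Set ℝ := fun t => {y : ℝ | t < y ^ 2} ∩ Set.Ioo (-a) a with hA
  have hgint : ∀ (m : Measure ℝ) [IsFiniteMeasure m],
      IntegrableOn (fun t => (m (A t)).toReal) (Set.Ioo 0 (a ^ 2)) volume := by
    intro m _
    have hanti : Antitone fun t => (m (A t)).toReal := by
      intro t1 t2 h12
      apply ENNReal.toReal_mono (measure_ne_top m _)
      apply measure_mono
      intro y hy
      exact ⟨lt_of_le_of_lt h12 hy.1, hy.2⟩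
    exact Measure.integrableOn_of_bounded measure_Ioo_lt_top.ne
      hanti.measurable.aestronglyMeasurable
      (Filter.Eventually.of_forall fun t => by
        rw [Real.norm_eq_abs, abs_of_nonneg ENNReal.toReal_nonneg]
        exact ENNReal.toReal_mono (measure_ne_top m _) (measure_mono (Set.subset_univ _)))
  have hA0 : ∀ t, a ^ 2 ≤ t → A t = ∅ := by
    intro t ht
    ext y
    simp only [hA, Set.mem_inter_iff, Set.mem_setOf_eq, Set.mem_Ioo,
      Set.mem_empty_iff_false, iff_false, not_and]
    intro h1 h2
    intro h3
    nlinarith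
  have hW : ∀ (m : Measure ℝ) [IsFiniteMeasure m], Integrable (fun x : ℝ => x ^ 2) m →
      ∫ y in Set.Ioo (-a) a, y ^ 2 ∂m = ∫ t in Set.Ioo 0 (a ^ 2), (m (A t)).toReal := by
    intro m _ hm2
    rw [layer_eq m hm2 measurableSet_Ioo]
    have hbridge : (fun t : ℝ => (m ({y : ℝ | t < y ^ 2} ∩ Set.Ioo (-a) a)).toReal)
        = fun t : ℝ => (m (A t)).toReal := by
      funext t
      simp only [hA]
    rw [hbridge]
    have hzero : ∀ t ∈ Set.Ici (a ^ 2), (m (A t)).toReal = 0 := fun t ht => by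
      rw [hA0 t ht]
      simp
    have hu : Set.Ioo 0 (a ^ 2) ∪ Set.Ici (a ^ 2) = Set.Ioi 0 :=
      Set.Ioo_union_Ici_eq_Ioi (by positivity)
    have hdisj : Disjoint (Set.Ioo 0 (a ^ 2)) (Set.Ici (a ^ 2)) := by
      rw [Set.disjoint_left]
      rintro t ⟨_, h2⟩ h3
      exact absurd h3 (not_le.mpr h2)
    have hi2 : IntegrableOn (fun t => (m (A t)).toReal) (Set.Ici (a ^ 2)) volume := by
      refine (integrableOn_congr_fun hzero measurableSet_Ici).mpr ?_
      exact integrableOn_zero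
    rw [← hu, setIntegral_union hdisj measurableSet_Ici (hgint m) hi2,
      setIntegral_eq_zero_of_forall_eq_zero hzero, add_zero]
  -- Decomposition of `A t` in terms of half-lines
  have hdec : ∀ t ∈ Set.Ioo 0 (a ^ 2), ∀ (m : Measure ℝ) [IsFiniteMeasure m],
      (m (A t)).toReal + (m {y : ℝ | a ≤ |y|}).toReal
        = (m (Set.Iio (-Real.sqrt t))).toReal + (m (Set.Ioi (Real.sqrt t))).toReal := by
    rintro t ⟨ht0, hta⟩ m _
    set s := Real.sqrt t with hs
    have hs0 : 0 < s := Real.sqrt_pos.mpr ht0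
    have hst : s ^ 2 = t := Real.sq_sqrt ht0.le
    have hsa : s < a := by nlinarith
    have he1 : Set.Iio (-s) ∪ Set.Ioi s = A t ∪ {y : ℝ | a ≤ |y|} := by
      ext y
      simp only [Set.mem_union, Set.mem_Iio, Set.mem_Ioi, hA, Set.mem_inter_iff,
        Set.mem_setOf_eq, Set.mem_Ioo]
      constructor
      · intro h
        by_cases hy : a ≤ |y|
        · exact Or.inr hy
        · left
          have hya := abs_lt.mp (not_le.mp hy)
          refine ⟨?_, hya.1, hya.2⟩
          rcases h with h | h
          · nlinarith
          · nlinarith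
      · rintro (⟨h1, _, _⟩ | h)
        · rcases le_or_gt y 0 with hy | hy
          · left; nlinarith
          · right; nlinarith
        · rcases le_abs.mp h with h | h
          · right; linarith
          · left; linarith
    have hd1 : Disjoint (A t) {y : ℝ | a ≤ |y|} := by
      rw [Set.disjoint_left]
      rintro y ⟨_, hy2⟩ hy3
      simp only [Set.mem_Ioo] at hy2
      simp only [Set.mem_setOf_eq] at hy3
      exact absurd hy3 (not_le.mpr (abs_lt.mpr ⟨hy2.1, hy2.2⟩))
    have hd2 : Disjoint (Set.Iio (-s)) (Set.Ioi s) := by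
      rw [Set.disjoint_left]
      intro y h1 h2
      simp only [Set.mem_Iio] at h1
      simp only [Set.mem_Ioi] at h2
      linarith
    have e2 := meas_union_toReal m hd1 hT
    have e3 := meas_union_toReal m hd2 measurableSet_Ioi
    rw [← he1] at e2
    rw [e2] at e3
    linarith
  -- Pointwise bounds on the layer-cake integrand
  have hkey : ∀ t ∈ Set.Ioo 0 (a ^ 2),
      (((ν₁ (A t)).toReal - (ν₂ (A t)).toReal) - (μ (A t)).toReal ≤ 4 * Δ) ∧
      (((ν₁ (A t)).toReal - (ν₂ (A t)).toReal) - (μ (A t)).toReal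
        ≤ (μ {y : ℝ | a ≤ |y|}).toReal + 3 * Δ + |G (-a)|) := by
    intro t ht
    have d1 := hdec t ht μ
    have d2 := hdec t ht ν₁
    have d3 := hdec t ht ν₂
    set s := Real.sqrt t with hs
    -- bound on the left piece
    have b1 := hIio (-s)
    have b1' := abs_le.mp b1
    -- bound on the right piece
    have b2 : (ν₁ (Set.Ioi s)).toReal - (ν₂ (Set.Ioi s)).toReal - (μ (Set.Ioi s)).toReal
        = F s - G s := by
      rw [hGIoi s, hFIoi s]
      ring
    have b2' := abs_le.mp (hΔpt s)
    -- bounds for the boundary set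
    have c1 := hTdec μ
    have c2 := hTdec ν₁
    have c3 := hTdec ν₂
    have c4 := hIciId μ
    have c5 := hIciId ν₁
    have c6 := hIciId ν₂
    rw [hμuniv] at c4
    have c7 := hIio a
    have c7' := abs_le.mp c7
    have c8 := abs_le.mp (hΔpt (-a))
    rw [hFdef (-a), hGdef (-a)] at c8
    have c9 : -((ν₁ (Set.Iic (-a))).toReal - (ν₂ (Set.Iic (-a))).toReal) ≤ |G (-a)| := by
      rw [hGdef (-a)]
      exact neg_le_abs _
    have c10 : (0:ℝ) ≤ (μ (Set.Ici a)).toReal := ENNReal.toReal_nonneg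
    constructor
    · linarith
    · linarith
  -- Integrated comparison bound
  have hWbound : ∀ c : ℝ,
      (∀ t ∈ Set.Ioo 0 (a ^ 2),
        ((ν₁ (A t)).toReal - (ν₂ (A t)).toReal) - (μ (A t)).toReal ≤ c) →
      ((∫ y in Set.Ioo (-a) a, y ^ 2 ∂ν₁) - ∫ y in Set.Ioo (-a) a, y ^ 2 ∂ν₂)
        - ∫ y in Set.Ioo (-a) a, y ^ 2 ∂μ ≤ a ^ 2 * c := by
    intro c hc
    rw [hW ν₁ hν₁2, hW ν₂ hν₂2, hW μ hμ2]
    have hint12 : IntegrableOn (fun t => (ν₁ (A t)).toReal - (ν₂ (A t)).toReal)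
        (Set.Ioo 0 (a ^ 2)) volume := (hgint ν₁).sub (hgint ν₂)
    have hint : IntegrableOn
        (fun t => ((ν₁ (A t)).toReal - (ν₂ (A t)).toReal) - (μ (A t)).toReal)
        (Set.Ioo 0 (a ^ 2)) volume := hint12.sub (hgint μ)
    have h1 : (∫ t in Set.Ioo 0 (a ^ 2),
            (((ν₁ (A t)).toReal - (ν₂ (A t)).toReal) - (μ (A t)).toReal))
        = (∫ t in Set.Ioo 0 (a ^ 2), (ν₁ (A t)).toReal)
        - (∫ t in Set.Ioo 0 (a ^ 2), (ν₂ (A t)).toReal)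
        - (∫ t in Set.Ioo 0 (a ^ 2), (μ (A t)).toReal) := by
      rw [integral_sub hint12 (hgint μ), integral_sub (hgint ν₁) (hgint ν₂)]
    rw [← h1]
    have h2 : (∫ t in Set.Ioo 0 (a ^ 2),
        (((ν₁ (A t)).toReal - (ν₂ (A t)).toReal) - (μ (A t)).toReal))
        ≤ ∫ _t in Set.Ioo 0 (a ^ 2), c :=
      setIntegral_mono_on hint (integrableOn_const measure_Ioo_lt_top.ne)
        measurableSet_Ioo hc
    have h3 : (∫ _t in Set.Ioo 0 (a ^ 2), c) = a ^ 2 * c := by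
      rw [setIntegral_const, Real.volume_real_Ioo_of_le (by positivity), smul_eq_mul]
      ring
    linarith
  -- Total-integral splittings
  have htotμ : (∫ y in {y : ℝ | a ≤ |y|}, y ^ 2 ∂μ) + ∫ y in Set.Ioo (-a) a, y ^ 2 ∂μ
      = ∫ y, y ^ 2 ∂μ := by
    have h := integral_add_compl hT hμ2
    rwa [hTc] at h
  have htot1 : (∫ y in {y : ℝ | a ≤ |y|}, y ^ 2 ∂ν₁) + ∫ y in Set.Ioo (-a) a, y ^ 2 ∂ν₁
      = ∫ y, y ^ 2 ∂ν₁ := by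
    have h := integral_add_compl hT hν₁2
    rwa [hTc] at h
  have htot2 : (∫ y in {y : ℝ | a ≤ |y|}, y ^ 2 ∂ν₂) + ∫ y in Set.Ioo (-a) a, y ^ 2 ∂ν₂
      = ∫ y, y ^ 2 ∂ν₂ := by
    have h := integral_add_compl hT hν₂2
    rwa [hTc] at h
  -- Nonnegativity facts
  have hIμ0 : 0 ≤ ∫ y in {y : ℝ | a ≤ |y|}, y ^ 2 ∂μ :=
    setIntegral_nonneg hT fun y _ => sq_nonneg y
  have hμTle : a ^ 2 * (μ {y : ℝ | a ≤ |y|}).toReal ≤ ∫ y in {y : ℝ | a ≤ |y|}, y ^ 2 ∂μ := by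
    refine const_le_setIntegral μ hμ2 hT ?_
    intro y hy
    have h1 : a ≤ |y| := hy
    nlinarith [sq_abs y, abs_nonneg y]
  -- Comparison of tail integrals
  have hIμI : (∫ y in {y : ℝ | a ≤ |y|}, y ^ 2 ∂μ)
      ≤ ((∫ y in {y : ℝ | a ≤ |y|}, y ^ 2 ∂ν₁) - ∫ y in {y : ℝ | a ≤ |y|}, y ^ 2 ∂ν₂)
        + 4 * a ^ 2 * Δ := by
    have hcmp := hWbound (4 * Δ) (fun t ht => (hkey t ht).1)
    nlinarith [htotμ, htot1, htot2, hmom, hcmp]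
  -- tail integral bounds for x
  have hIoi_le : ∀ x' : ℝ, a ≤ x' →
      x' ^ 2 * (μ (Set.Ioi x')).toReal ≤ ∫ y in {y : ℝ | a ≤ |y|}, y ^ 2 ∂μ := by
    intro x' hx'
    have h1 : x' ^ 2 * (μ (Set.Ioi x')).toReal ≤ ∫ y in Set.Ioi x', y ^ 2 ∂μ := by
      refine const_le_setIntegral μ hμ2 measurableSet_Ioi ?_
      intro y hy
      have : x' < y := hy
      nlinarith [ha, hx']
    refine le_trans h1 ?_
    refine setIntegral_mono_set hμ2.integrableOn
      (Filter.Eventually.of_forall fun y => sq_nonneg y) ?_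
    refine HasSubset.Subset.eventuallyLE ?_
    intro y hy
    have h2 : x' < y := hy
    have h3 : a ≤ y := by linarith
    simp only [Set.mem_setOf_eq]
    rw [abs_of_nonneg (by linarith : (0:ℝ) ≤ y)]
    exact h3
  have hIic_le : ∀ x' : ℝ, x' ≤ -a →
      x' ^ 2 * (μ (Set.Iic x')).toReal ≤ ∫ y in {y : ℝ | a ≤ |y|}, y ^ 2 ∂μ := by
    intro x' hx'
    have h1 : x' ^ 2 * (μ (Set.Iic x')).toReal ≤ ∫ y in Set.Iic x', y ^ 2 ∂μ := by
      refine const_le_setIntegral μ hμ2 measurableSet_Iic ?_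
      intro y hy
      have : y ≤ x' := hy
      nlinarith [ha, hx']
    refine le_trans h1 ?_
    refine setIntegral_mono_set hμ2.integrableOn
      (Filter.Eventually.of_forall fun y => sq_nonneg y) ?_
    refine HasSubset.Subset.eventuallyLE ?_
    intro y hy
    have h2 : y ≤ x' := hy
    simp only [Set.mem_setOf_eq]
    rw [abs_of_nonpos (by linarith : y ≤ 0)]
    linarith
  -- Final case analysis
  rcases le_or_gt a x with hax | hax
  · -- Case x ≥ a
    have h1 : |F x - G x| ≤ (1 - F x) + |1 - G x| := by
      have h := abs_sub (1 - G x) (1 - F x)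
      have h2 : |F x - G x| = |(1 - G x) - (1 - F x)| := by ring_nf
      rw [h2]
      rw [abs_of_nonneg (by linarith [hF1 x] : (0:ℝ) ≤ 1 - F x)] at h
      linarith
    have h2 : x ^ 2 * |F x - G x| ≤ x ^ 2 * (1 - F x) + x ^ 2 * |1 - G x| := by
      have := mul_le_mul_of_nonneg_left h1 (sq_nonneg x)
      nlinarith
    have h3 : x ^ 2 * (1 - F x) ≤ ∫ y in {y : ℝ | a ≤ |y|}, y ^ 2 ∂μ := by
      rw [← hFIoi x]
      exact hIoi_le x hax
    have h4 := hP1 x hax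
    have h5 : (⨆ y ∈ Set.Ici a, y ^ 2 * |1 - G y|)
        ≤ max (⨆ y ∈ Set.Ici a, y ^ 2 * |1 - G y|) (⨆ y ∈ Set.Iic (-a), y ^ 2 * |G y|) :=
      le_max_left _ _
    linarith
  rcases le_or_gt x (-a) with hxa | hxa
  · -- Case x ≤ -a
    have h1 : |F x - G x| ≤ F x + |G x| := by
      refine le_trans (abs_sub _ _) ?_
      rw [abs_of_nonneg (hF0 x)]
    have h2 : x ^ 2 * |F x - G x| ≤ x ^ 2 * F x + x ^ 2 * |G x| := by
      have := mul_le_mul_of_nonneg_left h1 (sq_nonneg x)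
      nlinarith
    have h3 : x ^ 2 * F x ≤ ∫ y in {y : ℝ | a ≤ |y|}, y ^ 2 ∂μ := by
      rw [hFdef x]
      exact hIic_le x hxa
    have h4 := hP2 x hxa
    have h5 : (⨆ y ∈ Set.Iic (-a), y ^ 2 * |G y|)
        ≤ max (⨆ y ∈ Set.Ici a, y ^ 2 * |1 - G y|) (⨆ y ∈ Set.Iic (-a), y ^ 2 * |G y|) :=
      le_max_right _ _
    linarith
  · -- Case -a < x < a
    have hx2 : x ^ 2 ≤ a ^ 2 := by nlinarith
    have hlhs : x ^ 2 * |F x - G x| ≤ a ^ 2 * Δ :=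
      mul_le_mul hx2 (hΔpt x) (abs_nonneg _) (sq_nonneg a)
    have hcmp := hWbound ((μ {y : ℝ | a ≤ |y|}).toReal + 3 * Δ + |G (-a)|)
      (fun t ht => (hkey t ht).2)
    have hGma : a ^ 2 * |G (-a)| ≤ ⨆ y ∈ Set.Iic (-a), y ^ 2 * |G y| := by
      have h := hP2 (-a) le_rfl
      rwa [neg_pow, Even.neg_one_pow even_two, one_mul] at h
    have h5 : (⨆ y ∈ Set.Iic (-a), y ^ 2 * |G y|)
        ≤ max (⨆ y ∈ Set.Ici a, y ^ 2 * |1 - G y|) (⨆ y ∈ Set.Iic (-a), y ^ 2 * |G y|) :=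
      le_max_right _ _
    have hexp : a ^ 2 * ((μ {y : ℝ | a ≤ |y|}).toReal + 3 * Δ + |G (-a)|)
        = a ^ 2 * (μ {y : ℝ | a ≤ |y|}).toReal + 3 * (a ^ 2 * Δ) + a ^ 2 * |G (-a)| := by
      ring
    rw [hexp] at hcmp
    nlinarith [htotμ, htot1, htot2, hmom, hcmp, hμTle, hGma, h5, hΔ0, hIμ0, hlhs]
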